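/- Let f be a real polynomial with expansion f = Σ_{k=0}^d f_k G_k^{(n)} in Gegenbauer polynomials with all f_k ≥ 0. Then for any finite set P = {p₁,…,p_M} of unit vectors in ℝⁿ, the sum Σᵢ Σⱼ f(⟨pᵢ, pⱼ⟩) ≥ f₀ M². -/

import Mathlib

open scoped RealInnerProductSpace
/-- The Gegenbauer polynomials `G_k^{(n)}`, normalized so that `G_k^{(n)}(1) = 1`,
defined by `G₀ = 1`, `G₁ = t`, and
`G_k^{(n)} = ((2k+n−4) t G_{k−1}^{(n)} − (k−1) G_{k−2}^{(n)}) / (k+n−3)`. -/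
noncomputable def gegenbauer (n : ℕ) : ℕ → ℝ → ℝ
  | 0 => fun _ => 1
  | 1 => fun t => t
  | (k + 2) => fun t =>
      ((2 * ((k : ℝ) + 2) + n - 4) * t * gegenbauer n (k + 1) t
        - ((k : ℝ) + 1) * gegenbauer n k t) / ((k : ℝ) + 2 + n - 3)

theorem delsarte_positivity (n d M : ℕ)
    (f : ℕ → ℝ) (hf : ∀ k, k ≤ d → 0 ≤ f k)
    (p : Fin M → EuclideanSpace ℝ (Fin n))
    (hnorm : ∀ i, ‖p i‖ = 1)
    (hSchoenberg : ∀ k : ℕ,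
      (Matrix.of fun i j : Fin M => gegenbauer n k ⟪p i, p j⟫).PosSemidef) :
    (f 0) * (M : ℝ) ^ 2 ≤
      ∑ i : Fin M, ∑ j : Fin M,
        ∑ k ∈ Finset.range (d + 1), f k * gegenbauer n k ⟪p i, p j⟫ := by

  have key : ∀ k : ℕ, 0 ≤ ∑ i : Fin M, ∑ j : Fin M, gegenbauer n k ⟪p i, p j⟫ := by
    intro k
    have h := (Matrix.posSemidef_iff_dotProduct_mulVec.mp (hSchoenberg k)).2 (fun _ => 1)
    simpa [dotProduct, Matrix.mulVec, Finset.mul_sum] using h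
  have hswap : (∑ i : Fin M, ∑ j : Fin M,
        ∑ k ∈ Finset.range (d + 1), f k * gegenbauer n k ⟪p i, p j⟫)
      = ∑ k ∈ Finset.range (d + 1),
          f k * ∑ i : Fin M, ∑ j : Fin M, gegenbauer n k ⟪p i, p j⟫ := by
    calc (∑ i : Fin M, ∑ j : Fin M,
            ∑ k ∈ Finset.range (d + 1), f k * gegenbauer n k ⟪p i, p j⟫)
        = ∑ i : Fin M, ∑ k ∈ Finset.range (d + 1),
            ∑ j : Fin M, f k * gegenbauer n k ⟪p i, p j⟫ :=
          Finset.sum_congr rfl fun i _ => Finset.sum_comm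
      _ = ∑ k ∈ Finset.range (d + 1), ∑ i : Fin M,
            ∑ j : Fin M, f k * gegenbauer n k ⟪p i, p j⟫ := Finset.sum_comm
      _ = ∑ k ∈ Finset.range (d + 1),
            f k * ∑ i : Fin M, ∑ j : Fin M, gegenbauer n k ⟪p i, p j⟫ := by
          simp_rw [Finset.mul_sum]
  rw [hswap, Finset.sum_range_succ']
  have h0 : f 0 * ∑ i : Fin M, ∑ j : Fin M, gegenbauer n 0 ⟪p i, p j⟫
      = f 0 * (M : ℝ) ^ 2 := by
    simp [gegenbauer, sq]
  rw [h0]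
  have : 0 ≤ ∑ k ∈ Finset.range d,
      f (k + 1) * ∑ i : Fin M, ∑ j : Fin M, gegenbauer n (k + 1) ⟪p i, p j⟫ := by
    refine Finset.sum_nonneg fun k hk => mul_nonneg ?_ (key _)
    exact hf _ (Nat.succ_le_of_lt (Finset.mem_range.mp hk))
  linarith
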